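/- Let β > 0 and let V be a bounded lower semicontinuous viscosity supersolution of the discounted HJBQVI. Set c = max{ (‖f_β‖_∞ + 1)/β, ‖g_β‖_∞ + 1 }, K₀ = −sup_{t,x,z} K(t,x,z) > 0, ξ = min{1, K₀}, and for 0 < λ < 1 define V_λ = (1 − λ)V + λc. Then: (a) for every test function φ once continuously differentiable in t and twice continuously differentiable in x on Ω̄ and every (t,x) ∈ [0,T) × ℝ at which V_λ − φ attains a local minimum, F_β((t,x), V_λ(t,x), (φ_t(t,x), φ_x(t,x)), φ_{xx}(t,x), M_β V_λ(t,x)) ≥ λξ; and (b) for every x ∈ ℝ, min{ V_λ(T,x) − g_β(x), V_λ(T,x) − M_β V_λ(T,x) } ≥ λξ. In other words, V_λ is a strict supersolution of the discounted HJBQVI with margin λξ. -/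

import Mathlib

open Filter Topology Set TopologicalSpace

noncomputable section

/-- The closed parabolic domain `Ω̄ = [0,T] × ℝ`. -/
def Omb (T : ℝ) : Set (ℝ × ℝ) := Set.Icc 0 T ×ˢ (Set.univ : Set ℝ)

/-- The (undiscounted) intervention operator applied to a payoff. -/
def Mop {Y : Type*} [MetricSpace Y] (Z : ℝ × ℝ → NonemptyCompacts Y)
    (Γ K : ℝ → ℝ → Y → ℝ) (V : ℝ × ℝ → ℝ) (p : ℝ × ℝ) : ℝ :=
  sSup ((fun z => V (p.1, Γ p.1 p.2 z) + K p.1 p.2 z) '' (Z p : Set Y))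

/-- The discounted intervention operator
`M_β V(t,x) = sup_{z ∈ Z(t,x)} { V(t, Γ(t,x,z)) + e^{βt} K(t,x,z) }`. -/
def MopB {Y : Type*} [MetricSpace Y] (β : ℝ) (Z : ℝ × ℝ → NonemptyCompacts Y)
    (Γ K : ℝ → ℝ → Y → ℝ) (V : ℝ × ℝ → ℝ) (p : ℝ × ℝ) : ℝ :=
  Mop Z Γ (fun t x z => Real.exp (β * t) * K t x z) V p

/-- The discounted HJBQVI operator `F_β((t,x), r, (q,p), A, ℓ)`. -/
def Fb (T β : ℝ) {W : Type*} (a b : ℝ → W → ℝ) (f : ℝ → ℝ → W → ℝ) (g : ℝ → ℝ) :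
    (ℝ × ℝ) × ℝ × (ℝ × ℝ) × ℝ × ℝ → ℝ
  | ((t, x), r, (q, p), A, l) =>
    if t < T then
      min (-q + β * r -
          ⨆ w, (((1 : ℝ) / 2) * b x w ^ 2 * A + a x w * p + Real.exp (β * t) * f t x w))
        (r - l)
    else min (r - Real.exp (β * T) * g x) (r - l)

/-- Upper semicontinuous envelope relative to the domain. -/
def upEnv (T : ℝ) (F : (ℝ × ℝ) × ℝ × (ℝ × ℝ) × ℝ × ℝ → ℝ)
    (ξ : (ℝ × ℝ) × ℝ × (ℝ × ℝ) × ℝ × ℝ) : ℝ :=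
  limsup F (𝓝[{η : (ℝ × ℝ) × ℝ × (ℝ × ℝ) × ℝ × ℝ | η.1 ∈ Omb T}] ξ)

/-- Test functions: once continuously differentiable in `t`, twice in `x`. -/
def C12 (φ φt φx φxx : ℝ × ℝ → ℝ) : Prop :=
  Continuous φ ∧ Continuous φt ∧ Continuous φx ∧ Continuous φxx ∧
    (∀ p : ℝ × ℝ, HasDerivAt (fun t => φ (t, p.2)) (φt p) p.1) ∧
    (∀ p : ℝ × ℝ, HasDerivAt (fun x => φ (p.1, x)) (φx p) p.2) ∧
    (∀ p : ℝ × ℝ, HasDerivAt (fun x => φx (p.1, x)) (φxx p) p.2)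

/-- Viscosity supersolution of the discounted HJBQVI. -/
def IsSupersolB (T β : ℝ) {W Y : Type*} [MetricSpace Y]
    (a b : ℝ → W → ℝ) (f : ℝ → ℝ → W → ℝ) (g : ℝ → ℝ)
    (Z : ℝ × ℝ → NonemptyCompacts Y) (Γ K : ℝ → ℝ → Y → ℝ)
    (V : ℝ × ℝ → ℝ) : Prop :=
  ∀ φ φt φx φxx : ℝ × ℝ → ℝ, C12 φ φt φx φxx → ∀ p ∈ Omb T,
    IsLocalMinOn (fun q => V q - φ q) (Omb T) p →
    0 ≤ upEnv T (Fb T β a b f g) (p, V p, (φt p, φx p), φxx p, MopB β Z Γ K V p)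

/-- The Hamiltonian supremum appearing in `Fb`. -/
def ham (β : ℝ) {W : Type*} (a b : ℝ → W → ℝ) (f : ℝ → ℝ → W → ℝ)
    (t x A p : ℝ) : ℝ :=
  ⨆ w, (((1 : ℝ) / 2) * b x w ^ 2 * A + a x w * p + Real.exp (β * t) * f t x w)

lemma limsup_pattern {α : Type*} {l : Filter α} [l.NeBot] {u : α → ℝ} {m : ℝ}
    (h0 : 0 ≤ Filter.limsup u l) (hlb : ∃ c, ∀ᶠ x in l, c ≤ u x)
    (h : ∀ ε > (0:ℝ), ∀ᶠ x in l, u x ≤ m + ε) : 0 ≤ m := by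
  obtain ⟨c, hc⟩ := hlb
  have hco : Filter.IsCoboundedUnder (· ≤ ·) l u :=
    Filter.IsBoundedUnder.isCoboundedUnder_le ⟨c, by
      simpa using hc⟩
  have : ∀ ε > (0:ℝ), (0:ℝ) ≤ m + ε := fun ε hε =>
    le_trans h0 (Filter.limsup_le_of_le hco (h ε hε))
  by_contra hm
  push_neg at hm
  have := this (-m/2) (by linarith)
  linarith

section hamlem

variable (T β : ℝ) {W : Type*} [MetricSpace W] [CompactSpace W] [Nonempty W]
  (a b : ℝ → W → ℝ) (f : ℝ → ℝ → W → ℝ)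

lemma fw_cont
    (hfc : ContinuousOn (fun p : ℝ × ℝ × W => f p.1 p.2.1 p.2.2)
      {p : ℝ × ℝ × W | p.1 ∈ Set.Icc 0 T})
    {t : ℝ} (ht : t ∈ Set.Icc 0 T) (x : ℝ) :
    Continuous fun w => f t x w := by
  have hmap : Continuous fun w : W => ((t, x, w) : ℝ × ℝ × W) :=
    continuous_const.prodMk (continuous_const.prodMk continuous_id)
  exact hfc.comp_continuous hmap (fun w => ht)

lemma ham_bdd
    (hfc : ContinuousOn (fun p : ℝ × ℝ × W => f p.1 p.2.1 p.2.2)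
      {p : ℝ × ℝ × W | p.1 ∈ Set.Icc 0 T})
    (hac : Continuous fun p : ℝ × W => a p.1 p.2)
    (hbc : Continuous fun p : ℝ × W => b p.1 p.2)
    {t : ℝ} (ht : t ∈ Set.Icc 0 T) (x A p : ℝ) :
    BddAbove (Set.range fun w =>
      ((1 : ℝ) / 2) * b x w ^ 2 * A + a x w * p + Real.exp (β * t) * f t x w) := by
  have haw : Continuous fun w => a x w :=
    hac.comp (continuous_const.prodMk continuous_id)
  have hbw : Continuous fun w => b x w :=
    hbc.comp (continuous_const.prodMk continuous_id)
  have hfw := fw_cont T f hfc ht x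
  have hcw : Continuous fun w =>
      ((1 : ℝ) / 2) * b x w ^ 2 * A + a x w * p + Real.exp (β * t) * f t x w := by
    apply Continuous.add
    apply Continuous.add
    · exact (continuous_const.mul (hbw.pow 2)).mul continuous_const
    · exact haw.mul continuous_const
    · exact continuous_const.mul hfw
  exact (isCompact_range hcw).bddAbove

lemma ham_lsc
    (hfc : ContinuousOn (fun p : ℝ × ℝ × W => f p.1 p.2.1 p.2.2)
      {p : ℝ × ℝ × W | p.1 ∈ Set.Icc 0 T})
    (hac : Continuous fun p : ℝ × W => a p.1 p.2)
    (hbc : Continuous fun p : ℝ × W => b p.1 p.2)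
    {α : Type*} {l : Filter α} {tc xc Ac pc : α → ℝ} {t₀ x₀ A₀ p₀ : ℝ}
    (htc : Tendsto tc l (𝓝 t₀)) (hxc : Tendsto xc l (𝓝 x₀))
    (hAc : Tendsto Ac l (𝓝 A₀)) (hpc : Tendsto pc l (𝓝 p₀))
    (htm : ∀ᶠ i in l, tc i ∈ Set.Icc 0 T) (ht₀ : t₀ ∈ Set.Icc 0 T)
    {y : ℝ} (hy : y < ham β a b f t₀ x₀ A₀ p₀) :
    ∀ᶠ i in l, y < ham β a b f (tc i) (xc i) (Ac i) (pc i) := by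
  simp only [ham] at hy
  obtain ⟨w₀, hw₀⟩ := exists_lt_of_lt_ciSup hy
  have hbw : Tendsto (fun i => b (xc i) w₀) l (𝓝 (b x₀ w₀)) :=
    (hbc.tendsto (x₀, w₀)).comp (hxc.prodMk_nhds tendsto_const_nhds)
  have haw : Tendsto (fun i => a (xc i) w₀) l (𝓝 (a x₀ w₀)) :=
    (hac.tendsto (x₀, w₀)).comp (hxc.prodMk_nhds tendsto_const_nhds)
  have hfw : Tendsto (fun i => f (tc i) (xc i) w₀) l (𝓝 (f t₀ x₀ w₀)) := by
    have hwt : Tendsto (fun i => ((tc i, xc i, w₀) : ℝ × ℝ × W)) l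
        (𝓝[{p : ℝ × ℝ × W | p.1 ∈ Set.Icc 0 T}] (t₀, x₀, w₀)) := by
      rw [tendsto_nhdsWithin_iff]
      exact ⟨htc.prodMk_nhds (hxc.prodMk_nhds tendsto_const_nhds),
        htm.mono fun i hi => hi⟩
    exact ((hfc _ ht₀).tendsto).comp hwt
  have hexp : Tendsto (fun i => Real.exp (β * tc i)) l (𝓝 (Real.exp (β * t₀))) :=
    (Real.continuous_exp.tendsto _).comp (htc.const_mul β)
  have hterm : Tendsto (fun i =>
      ((1 : ℝ) / 2) * b (xc i) w₀ ^ 2 * Ac i + a (xc i) w₀ * pc i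
        + Real.exp (β * tc i) * f (tc i) (xc i) w₀) l
      (𝓝 (((1 : ℝ) / 2) * b x₀ w₀ ^ 2 * A₀ + a x₀ w₀ * p₀
        + Real.exp (β * t₀) * f t₀ x₀ w₀)) :=
    ((((hbw.pow 2).const_mul _).mul hAc).add (haw.mul hpc)).add (hexp.mul hfw)
  filter_upwards [hterm.eventually_const_lt hw₀, htm] with i hi₁ hi₂
  exact lt_of_lt_of_le hi₁ (le_ciSup (ham_bdd T β a b f hfc hac hbc hi₂ _ _ _) w₀)

end hamlem

section hamub

set_option linter.unusedSectionVars false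

variable (T β : ℝ) {W : Type*} [MetricSpace W] [CompactSpace W] [Nonempty W]
  (a b : ℝ → W → ℝ) (f : ℝ → ℝ → W → ℝ)

lemma ham_ub
    (hfc : ContinuousOn (fun p : ℝ × ℝ × W => f p.1 p.2.1 p.2.2)
      {p : ℝ × ℝ × W | p.1 ∈ Set.Icc 0 T})
    (hac : Continuous fun p : ℝ × W => a p.1 p.2)
    (hbc : Continuous fun p : ℝ × W => b p.1 p.2)
    {α : Type*} {l : Filter α} {tc xc Ac pc : α → ℝ} {x₀ A₀ p₀ : ℝ}
    (hxc : Tendsto xc l (𝓝 x₀))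
    (hAc : Tendsto Ac l (𝓝 A₀)) (hpc : Tendsto pc l (𝓝 p₀))
    (htm : ∀ᶠ i in l, tc i ∈ Set.Icc 0 T) :
    ∃ M, ∀ᶠ i in l, ham β a b f (tc i) (xc i) (Ac i) (pc i) ≤ M := by
  -- bounds for `f` on a compact neighborhood
  have hQc : IsCompact ((Set.Icc (0:ℝ) T) ×ˢ (Set.Icc (x₀-1) (x₀+1)) ×ˢ (Set.univ : Set W)) :=
    isCompact_Icc.prod (isCompact_Icc.prod isCompact_univ)
  obtain ⟨Mf, hMf⟩ := hQc.exists_bound_of_continuousOn (hfc.mono (fun p hp => hp.1))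
  have hIc : IsCompact ((Set.Icc (x₀-1) (x₀+1)) ×ˢ (Set.univ : Set W)) :=
    isCompact_Icc.prod isCompact_univ
  obtain ⟨Ma, hMa⟩ := hIc.exists_bound_of_continuousOn hac.continuousOn
  obtain ⟨Mb, hMb⟩ := hIc.exists_bound_of_continuousOn hbc.continuousOn
  set Me := Real.exp (|β| * T) with hMe
  refine ⟨(1:ℝ)/2 * Mb^2 * (|A₀|+1) + Ma * (|p₀|+1) + Me * Mf, ?_⟩
  have hx1 : ∀ᶠ i in l, |xc i - x₀| < 1 := by
    have : Tendsto (fun i => |xc i - x₀|) l (𝓝 |x₀ - x₀|) :=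
      (continuous_abs.tendsto _).comp ((hxc.sub tendsto_const_nhds))
    simpa using this.eventually_lt_const (by simp : |x₀ - x₀| < 1)
  have hA1 : ∀ᶠ i in l, |Ac i| < |A₀| + 1 :=
    ((continuous_abs.tendsto _).comp hAc).eventually_lt_const (by linarith [abs_nonneg A₀])
  have hp1 : ∀ᶠ i in l, |pc i| < |p₀| + 1 :=
    ((continuous_abs.tendsto _).comp hpc).eventually_lt_const (by linarith [abs_nonneg p₀])
  filter_upwards [hx1, hA1, hp1, htm] with i h1 h2 h3 h4
  have hxI : xc i ∈ Set.Icc (x₀-1) (x₀+1) := by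
    rw [Set.mem_Icc]; constructor <;> [linarith [abs_le.mp h1.le]; linarith [(abs_le.mp h1.le).2]]
  apply ciSup_le
  intro w
  have hfb : |f (tc i) (xc i) w| ≤ Mf := by
    simpa using hMf ((tc i, xc i, w)) ⟨h4, hxI, trivial⟩
  have hab : |a (xc i) w| ≤ Ma := by simpa using hMa ((xc i, w)) ⟨hxI, trivial⟩
  have hbb : |b (xc i) w| ≤ Mb := by simpa using hMb ((xc i, w)) ⟨hxI, trivial⟩
  have hMb0 : 0 ≤ Mb := le_trans (abs_nonneg _) hbb
  have hMa0 : 0 ≤ Ma := le_trans (abs_nonneg _) hab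
  have hMf0 : 0 ≤ Mf := le_trans (abs_nonneg _) hfb
  have hexp : Real.exp (β * tc i) ≤ Me := by
    rw [hMe]
    apply Real.exp_le_exp.mpr
    rcases h4 with ⟨h40, h4T⟩
    calc β * tc i ≤ |β * tc i| := le_abs_self _
    _ = |β| * |tc i| := abs_mul _ _
    _ ≤ |β| * T := by
        apply mul_le_mul_of_nonneg_left _ (abs_nonneg β)
        rw [abs_of_nonneg h40]; exact h4T
  have e0 : (0:ℝ) < Real.exp (β * tc i) := Real.exp_pos _
  have hb2 : b (xc i) w ^ 2 ≤ Mb ^ 2 := by nlinarith [abs_le.mp hbb, sq_abs (b (xc i) w)]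
  have h1' : (1:ℝ)/2 * b (xc i) w ^ 2 * Ac i ≤ 1/2 * Mb^2 * (|A₀|+1) := by
    nlinarith [sq_nonneg (b (xc i) w), abs_le.mp h2.le, le_abs_self (Ac i), neg_abs_le (Ac i)]
  have h2' : a (xc i) w * pc i ≤ Ma * (|p₀|+1) := by
    nlinarith [abs_le.mp hab, abs_le.mp h3.le, le_abs_self (pc i), neg_abs_le (pc i)]
  have h3' : Real.exp (β * tc i) * f (tc i) (xc i) w ≤ Me * Mf := by
    have hMe0 : (0:ℝ) < Me := Real.exp_pos _
    nlinarith [abs_le.mp hfb]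
  linarith

end hamub

section extraction

set_option linter.unusedSectionVars false

variable (T β : ℝ) {W : Type*} [MetricSpace W] [CompactSpace W] [Nonempty W]
  (a b : ℝ → W → ℝ) (f : ℝ → ℝ → W → ℝ) (g : ℝ → ℝ)

-- abbreviation for the big product space
local notation "P" => ((ℝ × ℝ) × ℝ × (ℝ × ℝ) × ℝ × ℝ)

lemma fb_eq (t x r q pp A l : ℝ) :
    Fb T β a b f g ((t, x), r, (q, pp), A, l) =
      if t < T then min (-q + β * r - ham β a b f t x A pp) (r - l)
      else min (r - Real.exp (β * T) * g x) (r - l) := rfl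

lemma upEnv_extract
    (hfc : ContinuousOn (fun p : ℝ × ℝ × W => f p.1 p.2.1 p.2.2)
      {p : ℝ × ℝ × W | p.1 ∈ Set.Icc 0 T})
    (hgc : Continuous g)
    (hac : Continuous fun p : ℝ × W => a p.1 p.2)
    (hbc : Continuous fun p : ℝ × W => b p.1 p.2)
    (t₀ x₀ r₀ q₀ p₀ A₀ l₀ : ℝ) (ht₀ : t₀ ∈ Set.Icc 0 T)
    (h0 : 0 ≤ upEnv T (Fb T β a b f g) ((t₀, x₀), r₀, (q₀, p₀), A₀, l₀)) :
    (t₀ < T → 0 ≤ min (-q₀ + β * r₀ - ham β a b f t₀ x₀ A₀ p₀) (r₀ - l₀)) ∧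
    (0 ≤ max (-q₀ + β * r₀ - ham β a b f t₀ x₀ A₀ p₀)
      (min (r₀ - Real.exp (β * T) * g x₀) (r₀ - l₀))) := by
  classical
  set S : Set P := {η : P | η.1 ∈ Omb T} with hS
  set ξ : P := ((t₀, x₀), r₀, (q₀, p₀), A₀, l₀) with hξ
  have hξS : ξ ∈ S := by
    simp only [hS, Set.mem_setOf_eq, hξ, Omb]
    exact ⟨ht₀, trivial⟩
  haveI : (𝓝[S] ξ).NeBot := nhdsWithin_neBot_of_mem hξS
  simp only [upEnv] at h0
  -- coordinate tendsto facts
  have ct : Tendsto (fun η : P => η.1.1) (𝓝[S] ξ) (𝓝 t₀) :=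
    ((continuous_fst.fst).tendsto ξ).mono_left nhdsWithin_le_nhds
  have cx : Tendsto (fun η : P => η.1.2) (𝓝[S] ξ) (𝓝 x₀) :=
    ((continuous_fst.snd).tendsto ξ).mono_left nhdsWithin_le_nhds
  have cr : Tendsto (fun η : P => η.2.1) (𝓝[S] ξ) (𝓝 r₀) :=
    ((continuous_snd.fst).tendsto ξ).mono_left nhdsWithin_le_nhds
  have cq : Tendsto (fun η : P => η.2.2.1.1) (𝓝[S] ξ) (𝓝 q₀) :=
    ((continuous_snd.snd.fst.fst).tendsto ξ).mono_left nhdsWithin_le_nhds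
  have cp : Tendsto (fun η : P => η.2.2.1.2) (𝓝[S] ξ) (𝓝 p₀) :=
    ((continuous_snd.snd.fst.snd).tendsto ξ).mono_left nhdsWithin_le_nhds
  have cA : Tendsto (fun η : P => η.2.2.2.1) (𝓝[S] ξ) (𝓝 A₀) :=
    ((continuous_snd.snd.snd.fst).tendsto ξ).mono_left nhdsWithin_le_nhds
  have cl : Tendsto (fun η : P => η.2.2.2.2) (𝓝[S] ξ) (𝓝 l₀) :=
    ((continuous_snd.snd.snd.snd).tendsto ξ).mono_left nhdsWithin_le_nhds
  have htm : ∀ᶠ η in 𝓝[S] ξ, (fun η : P => η.1.1) η ∈ Set.Icc 0 T := by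
    filter_upwards [self_mem_nhdsWithin] with η hη
    exact hη.1
  -- eventual lower bound for Fb, needed for coboundedness
  obtain ⟨M, hM⟩ := ham_ub T β a b f hfc hac hbc cx cA cp htm
  have hlb : ∃ c, ∀ᶠ η in 𝓝[S] ξ, c ≤ Fb T β a b f g η := by
    refine ⟨min (min (-q₀ + β * r₀ - M - 1) (r₀ - Real.exp (β * T) * g x₀ - 1))
      (r₀ - l₀ - 1), ?_⟩
    have e1 : ∀ᶠ η in 𝓝[S] ξ, -q₀ + β * r₀ - 1 < - η.2.2.1.1 + β * η.2.1 :=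
      ((cq.neg).add (cr.const_mul β)).eventually_const_lt (by linarith)
    have e2 : ∀ᶠ η in 𝓝[S] ξ, r₀ - l₀ - 1 < η.2.1 - η.2.2.2.2 :=
      (cr.sub cl).eventually_const_lt (by linarith)
    have cg : Tendsto (fun η : P => Real.exp (β * T) * g η.1.2) (𝓝[S] ξ)
        (𝓝 (Real.exp (β * T) * g x₀)) := ((hgc.tendsto x₀).comp cx).const_mul _
    have e3 : ∀ᶠ η in 𝓝[S] ξ, r₀ - Real.exp (β * T) * g x₀ - 1 <
        η.2.1 - Real.exp (β * T) * g η.1.2 :=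
      (cr.sub cg).eventually_const_lt (by linarith)
    filter_upwards [e1, e2, e3, hM] with η h1 h2 h3 h4
    obtain ⟨⟨t, x⟩, r, ⟨q, pp⟩, A, l⟩ := η
    rw [fb_eq]
    simp only at h1 h2 h3 h4
    by_cases hlt : t < T
    · rw [if_pos hlt]
      apply le_min
      · exact le_trans (min_le_left _ _) (le_trans (min_le_left _ _) (by linarith))
      · exact le_trans (min_le_right _ _) (by linarith)
    · rw [if_neg hlt]
      apply le_min
      · exact le_trans (min_le_left _ _) (le_trans (min_le_right _ _) (by linarith))
      · exact le_trans (min_le_right _ _) (by linarith)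
  constructor
  · -- interior case
    intro hlt
    apply limsup_pattern h0 hlb
    intro ε hε
    have e0 : ∀ᶠ η in 𝓝[S] ξ, (fun η : P => η.1.1) η < T :=
      ct.eventually_lt_const hlt
    have e1 : ∀ᶠ η in 𝓝[S] ξ, - η.2.2.1.1 + β * η.2.1 < -q₀ + β * r₀ + ε/2 :=
      ((cq.neg).add (cr.const_mul β)).eventually_lt_const (by linarith)
    have e2 : ∀ᶠ η in 𝓝[S] ξ, η.2.1 - η.2.2.2.2 < r₀ - l₀ + ε :=
      (cr.sub cl).eventually_lt_const (by linarith)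
    have e3 := ham_lsc T β a b f hfc hac hbc ct cx cA cp htm ht₀
      (y := ham β a b f t₀ x₀ A₀ p₀ - ε/2) (by linarith)
    filter_upwards [e0, e1, e2, e3] with η h0' h1 h2 h3
    obtain ⟨⟨t, x⟩, r, ⟨q, pp⟩, A, l⟩ := η
    simp only at h0' h1 h2 h3
    rw [fb_eq, if_pos h0']
    have hA' : -q + β * r - ham β a b f t x A pp ≤
        (-q₀ + β * r₀ - ham β a b f t₀ x₀ A₀ p₀) + ε := by linarith
    have hD' : r - l ≤ (r₀ - l₀) + ε := h2.le
    calc min (-q + β * r - ham β a b f t x A pp) (r - l)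
        ≤ min ((-q₀ + β * r₀ - ham β a b f t₀ x₀ A₀ p₀) + ε) ((r₀ - l₀) + ε) :=
          min_le_min hA' hD'
      _ = min (-q₀ + β * r₀ - ham β a b f t₀ x₀ A₀ p₀) (r₀ - l₀) + ε :=
          min_add_add_right _ _ _
  · -- general case
    apply limsup_pattern h0 hlb
    intro ε hε
    have e1 : ∀ᶠ η in 𝓝[S] ξ, - η.2.2.1.1 + β * η.2.1 < -q₀ + β * r₀ + ε/2 :=
      ((cq.neg).add (cr.const_mul β)).eventually_lt_const (by linarith)
    have e2 : ∀ᶠ η in 𝓝[S] ξ, η.2.1 - η.2.2.2.2 < r₀ - l₀ + ε :=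
      (cr.sub cl).eventually_lt_const (by linarith)
    have e3 := ham_lsc T β a b f hfc hac hbc ct cx cA cp htm ht₀
      (y := ham β a b f t₀ x₀ A₀ p₀ - ε/2) (by linarith)
    have cg : Tendsto (fun η : P => Real.exp (β * T) * g η.1.2) (𝓝[S] ξ)
        (𝓝 (Real.exp (β * T) * g x₀)) := ((hgc.tendsto x₀).comp cx).const_mul _
    have e4 : ∀ᶠ η in 𝓝[S] ξ, η.2.1 - Real.exp (β * T) * g η.1.2 <
        r₀ - Real.exp (β * T) * g x₀ + ε :=
      (cr.sub cg).eventually_lt_const (by linarith)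
    filter_upwards [e1, e2, e3, e4] with η h1 h2 h3 h4
    obtain ⟨⟨t, x⟩, r, ⟨q, pp⟩, A, l⟩ := η
    simp only at h1 h2 h3 h4
    rw [fb_eq]
    by_cases hlt : t < T
    · rw [if_pos hlt]
      refine le_trans (le_trans (min_le_left _ _) (by linarith : -q + β * r -
        ham β a b f t x A pp ≤ (-q₀ + β * r₀ - ham β a b f t₀ x₀ A₀ p₀) + ε)) ?_
      exact add_le_add (le_max_left _ _) le_rfl
    · rw [if_neg hlt]
      have hB1 : r - Real.exp (β * T) * g x ≤ (r₀ - Real.exp (β * T) * g x₀) + ε := h4.le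
      have hB2 : r - l ≤ (r₀ - l₀) + ε := h2.le
      calc min (r - Real.exp (β * T) * g x) (r - l)
          ≤ min ((r₀ - Real.exp (β * T) * g x₀) + ε) ((r₀ - l₀) + ε) :=
            min_le_min hB1 hB2
        _ = min (r₀ - Real.exp (β * T) * g x₀) (r₀ - l₀) + ε := min_add_add_right _ _ _
        _ ≤ _ + ε := add_le_add (le_max_right _ _) le_rfl

end extraction

section mopb

variable {Y : Type*} [MetricSpace Y] (T β : ℝ) (Z : ℝ × ℝ → NonemptyCompacts Y)
  (Γ K : ℝ → ℝ → Y → ℝ)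

lemma mopB_eq (V : ℝ × ℝ → ℝ) (p : ℝ × ℝ) :
    MopB β Z Γ K V p =
      sSup ((fun z => V (p.1, Γ p.1 p.2 z) + Real.exp (β * p.1) * K p.1 p.2 z)
        '' (Z p : Set Y)) := rfl

lemma mopB_bdd (Ksup : ℝ) (hKs : ∀ t ∈ Set.Icc (0:ℝ) T, ∀ (x : ℝ) (z : Y), K t x z ≤ Ksup)
    (hKneg : Ksup ≤ 0) (U : ℝ × ℝ → ℝ) (CU : ℝ) (hU : ∀ q ∈ Omb T, U q ≤ CU)
    (p : ℝ × ℝ) (hp : p ∈ Omb T) :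
    BddAbove ((fun z => U (p.1, Γ p.1 p.2 z) + Real.exp (β * p.1) * K p.1 p.2 z)
      '' (Z p : Set Y)) := by
  refine ⟨CU, ?_⟩
  rintro y ⟨z, hz, rfl⟩
  have h1 : U (p.1, Γ p.1 p.2 z) ≤ CU := hU _ ⟨hp.1, trivial⟩
  have h2 : K p.1 p.2 z ≤ Ksup := hKs p.1 hp.1 p.2 z
  have h3 : (0:ℝ) < Real.exp (β * p.1) := Real.exp_pos _
  show U (p.1, Γ p.1 p.2 z) + Real.exp (β * p.1) * K p.1 p.2 z ≤ CU
  nlinarith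

lemma le_mopB (U : ℝ × ℝ → ℝ) (p : ℝ × ℝ)
    (hbdd : BddAbove ((fun z => U (p.1, Γ p.1 p.2 z) + Real.exp (β * p.1) * K p.1 p.2 z)
      '' (Z p : Set Y)))
    {z : Y} (hz : z ∈ (Z p : Set Y)) :
    U (p.1, Γ p.1 p.2 z) + Real.exp (β * p.1) * K p.1 p.2 z ≤ MopB β Z Γ K U p :=
  le_csSup hbdd ⟨z, hz, rfl⟩

lemma mopB_le (U : ℝ × ℝ → ℝ) (p : ℝ × ℝ) {B : ℝ}
    (h : ∀ z ∈ (Z p : Set Y),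
      U (p.1, Γ p.1 p.2 z) + Real.exp (β * p.1) * K p.1 p.2 z ≤ B) :
    MopB β Z Γ K U p ≤ B := by
  rw [mopB_eq]
  apply csSup_le (((Z p).nonempty).image _)
  rintro y ⟨z, hz, rfl⟩
  exact h z hz

end mopb

/-- A lower semicontinuous function bounded below attains its minimum on a
nonempty compact set (metric space version). -/
lemma lsc_minOn {X : Type*} [MetricSpace X] {s : Set X} (hs : IsCompact s)
    (hne : s.Nonempty) {f : X → ℝ} (hf : LowerSemicontinuousOn f s)
    (hbd : ∃ B, ∀ x ∈ s, B ≤ f x) : ∃ q ∈ s, ∀ x ∈ s, f q ≤ f x := by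
  obtain ⟨B, hB⟩ := hbd
  have hne' : (f '' s).Nonempty := hne.image f
  have hbdd : BddBelow (f '' s) := ⟨B, by rintro y ⟨x, hx, rfl⟩; exact hB x hx⟩
  set m := sInf (f '' s) with hm
  have key : ∀ k : ℕ, ∃ x, x ∈ s ∧ f x < m + 1/(k+1) := by
    intro k
    have hlt : m < m + 1/(k+1) := by
      have : (0:ℝ) < 1/(k+1) := by positivity
      linarith
    obtain ⟨y, ⟨x, hx, rfl⟩, hy⟩ := exists_lt_of_csInf_lt hne' hlt
    exact ⟨x, hx, hy⟩
  choose u hu hfu using key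
  obtain ⟨q, hq, φ, hφ, hconv⟩ := hs.tendsto_subseq hu
  refine ⟨q, hq, ?_⟩
  have hfq : f q ≤ m := by
    by_contra h
    push_neg at h
    set y := (m + f q)/2 with hy
    have hy1 : y < f q := by rw [hy]; linarith
    have hy2 : m < y := by rw [hy]; linarith
    have hconv' : Tendsto (u ∘ φ) atTop (𝓝[s] q) := by
      rw [tendsto_nhdsWithin_iff]
      exact ⟨hconv, Eventually.of_forall fun k => hu _⟩
    have hev1 : ∀ᶠ k in atTop, y < f (u (φ k)) := hconv' (hf q hq y hy1)
    have hev2 : ∀ᶠ k in atTop, f (u (φ k)) < y := by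
      have htend : Tendsto (fun k : ℕ => 1/((k:ℝ)+1)) atTop (𝓝 0) :=
        tendsto_one_div_add_atTop_nhds_zero_nat
      have hev3 : ∀ᶠ k : ℕ in atTop, 1/((k:ℝ)+1) < y - m :=
        htend.eventually_lt_const (by linarith)
      filter_upwards [hev3] with k hk
      have hk1 : 1/((φ k : ℝ)+1) ≤ 1/((k:ℝ)+1) := by
        apply one_div_le_one_div_of_le (by positivity)
        exact_mod_cast Nat.succ_le_succ (hφ.le_apply)
      have := hfu (φ k)
      linarith
    obtain ⟨k, h1, h2⟩ := (hev1.and hev2).exists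
    linarith
  intro x hx
  exact le_trans hfq (csInf_le hbdd ⟨x, hx, rfl⟩)

/-- C¹²-regularity of the test functions `(t,x) ↦ N² t - N (x-x₀)²`. -/
lemma c12_quad (N x₀ : ℝ) :
    C12 (fun q : ℝ × ℝ => N^2 * q.1 - N * (q.2 - x₀)^2)
      (fun _ => N^2) (fun q => -(2*N) * (q.2 - x₀)) (fun _ => -(2*N)) := by
  refine ⟨by fun_prop, continuous_const, by fun_prop, continuous_const, ?_, ?_, ?_⟩
  · intro p
    have h := (HasDerivAt.const_mul (N^2) (hasDerivAt_id' (x := p.1))).sub_const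
      (N * (p.2 - x₀)^2)
    simpa using h
  · intro p
    have h1 : HasDerivAt (fun x : ℝ => (x - x₀)^2) (2*(p.2 - x₀)) p.2 := by
      simpa using ((hasDerivAt_id' (x := p.2)).sub_const x₀).fun_pow 2
    have h2 := (HasDerivAt.const_mul N h1).const_sub (N^2 * p.1)
    refine h2.congr_deriv ?_
    ring
  · intro p
    have h := HasDerivAt.const_mul (-(2*N)) ((hasDerivAt_id' (x := p.2)).sub_const x₀)
    simpa using h

lemma terminal_ineq
    (T : ℝ) (hT : 0 < T) (β : ℝ) (hβ : 0 < β)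
    {W : Type*} [MetricSpace W] [CompactSpace W] [Nonempty W]
    {Y : Type*} [MetricSpace Y]
    (Z : ℝ × ℝ → NonemptyCompacts Y) (hZ : ContinuousOn Z (Omb T))
    (f : ℝ → ℝ → W → ℝ)
    (hfc : ContinuousOn (fun p : ℝ × ℝ × W => f p.1 p.2.1 p.2.2)
      {p : ℝ × ℝ × W | p.1 ∈ Set.Icc 0 T})
    (g : ℝ → ℝ) (hgc : Continuous g)
    (Γ : ℝ → ℝ → Y → ℝ)
    (hΓ : ContinuousOn (fun p : ℝ × ℝ × Y => Γ p.1 p.2.1 p.2.2)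
      {p : ℝ × ℝ × Y | p.1 ∈ Set.Icc 0 T})
    (K : ℝ → ℝ → Y → ℝ)
    (hK : ContinuousOn (fun p : ℝ × ℝ × Y => K p.1 p.2.1 p.2.2)
      {p : ℝ × ℝ × Y | p.1 ∈ Set.Icc 0 T})
    (a b : ℝ → W → ℝ)
    (hac : Continuous fun p : ℝ × W => a p.1 p.2)
    (hbc : Continuous fun p : ℝ × W => b p.1 p.2)
    (Cf : ℝ) (hCf : ∀ t ∈ Set.Icc (0 : ℝ) T, ∀ (x : ℝ) (w : W),
      |Real.exp (β * t) * f t x w| ≤ Cf)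
    (Ksup : ℝ) (hKs : ∀ t ∈ Set.Icc (0 : ℝ) T, ∀ (x : ℝ) (z : Y), K t x z ≤ Ksup)
    (hKsneg : Ksup < 0)
    (V : ℝ × ℝ → ℝ) (hVb : ∃ C, ∀ p ∈ Omb T, |V p| ≤ C)
    (hVlsc : LowerSemicontinuousOn V (Omb T))
    (hsup : IsSupersolB T β a b f g Z Γ K V)
    (x₀ : ℝ) :
    Real.exp (β * T) * g x₀ ≤ V (T, x₀) ∧ MopB β Z Γ K V (T, x₀) ≤ V (T, x₀) := by
  classical
  obtain ⟨C₀, hC₀⟩ := hVb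
  have hTO : (T, x₀) ∈ Omb T := ⟨⟨hT.le, le_refl T⟩, trivial⟩
  have hC00 : 0 ≤ C₀ := le_trans (abs_nonneg _) (hC₀ _ hTO)
  set r₀ : ℝ := Real.sqrt (2*C₀) + 1 with hr₀
  clear_value r₀
  have hsq0 : 0 ≤ Real.sqrt (2*C₀) := Real.sqrt_nonneg _
  have hr₀pos : 0 < r₀ := by rw [hr₀]; positivity
  have hs2C : Real.sqrt (2*C₀) ^ 2 = 2*C₀ := Real.sq_sqrt (by positivity)
  set Kset : Set (ℝ × ℝ) := Set.Icc (0:ℝ) T ×ˢ Set.Icc (x₀-r₀) (x₀+r₀) with hKset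
  have hKsetc : IsCompact Kset := isCompact_Icc.prod isCompact_Icc
  have hTx₀K : (T, x₀) ∈ Kset := ⟨⟨hT.le, le_refl T⟩, ⟨by linarith, by linarith⟩⟩
  have hKsub : Kset ⊆ Omb T := fun q hq => ⟨hq.1, trivial⟩
  -- minimizers of V - φ_n on Kset
  have hmins : ∀ n : ℕ, ∃ q, q ∈ Kset ∧ ∀ x ∈ Kset,
      V q - ((n:ℝ)^2 * q.1 - (n:ℝ) * (q.2 - x₀)^2) ≤
        V x - ((n:ℝ)^2 * x.1 - (n:ℝ) * (x.2 - x₀)^2) := by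
    intro n
    have hlsc : LowerSemicontinuousOn
        (fun q : ℝ × ℝ => V q - ((n:ℝ)^2 * q.1 - (n:ℝ) * (q.2 - x₀)^2)) Kset := by
      have h1 : LowerSemicontinuousOn V Kset := hVlsc.mono hKsub
      have h2 : LowerSemicontinuousOn
          (fun q : ℝ × ℝ => -((n:ℝ)^2 * q.1 - (n:ℝ) * (q.2 - x₀)^2)) Kset :=
        ((Continuous.neg (by fun_prop)).lowerSemicontinuous).lowerSemicontinuousOn _
      simpa [sub_eq_add_neg] using h1.add h2
    have hbd : ∃ B, ∀ q ∈ Kset,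
        B ≤ V q - ((n:ℝ)^2 * q.1 - (n:ℝ) * (q.2 - x₀)^2) := by
      refine ⟨-C₀ - (n:ℝ)^2 * T, fun q hq => ?_⟩
      have h1 := abs_le.mp (hC₀ q (hKsub hq))
      have h2 : q.1 ≤ T := hq.1.2
      have h3 : (0:ℝ) ≤ (n:ℝ) * (q.2 - x₀)^2 := by positivity
      nlinarith [sq_nonneg ((n:ℝ))]
    obtain ⟨q, hq, hmin⟩ := lsc_minOn hKsetc ⟨(T,x₀), hTx₀K⟩ hlsc hbd
    exact ⟨q, hq, hmin⟩
  choose pn hpnK hpnmin using hmins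
  have hpnO : ∀ n, pn n ∈ Omb T := fun n => hKsub (hpnK n)
  have hpnt : ∀ n, (pn n).1 ∈ Set.Icc (0:ℝ) T := fun n => (hpnO n).1
  have hVpn : ∀ n, |V (pn n)| ≤ C₀ := fun n => hC₀ _ (hpnO n)
  have hVT : |V (T, x₀)| ≤ C₀ := hC₀ _ hTO
  have hcomp : ∀ n : ℕ,
      V (pn n) - ((n:ℝ)^2 * (pn n).1 - (n:ℝ) * ((pn n).2 - x₀)^2) ≤
        V (T, x₀) - (n:ℝ)^2 * T := by
    intro n
    have := hpnmin n (T, x₀) hTx₀K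
    simpa using this
  have hkey : ∀ n : ℕ,
      (n:ℝ) * ((pn n).2 - x₀)^2 + (n:ℝ)^2 * (T - (pn n).1) ≤ 2*C₀ := by
    intro n
    have h1 := hcomp n
    have h2 := abs_le.mp (hVpn n)
    have h3 := abs_le.mp hVT
    nlinarith
  have hVle : ∀ n : ℕ, V (pn n) ≤ V (T, x₀) := by
    intro n
    have h1 := hcomp n
    have h2 : (pn n).1 ≤ T := (hpnt n).2
    have h3 : (0:ℝ) ≤ (n:ℝ) * ((pn n).2 - x₀)^2 := by positivity
    nlinarith [sq_nonneg ((n:ℝ))]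
  have hxn_close : ∀ n : ℕ, 1 ≤ n → |(pn n).2 - x₀| ≤ Real.sqrt (2*C₀) := by
    intro n hn
    have h1 := hkey n
    have hn1 : (1:ℝ) ≤ (n:ℝ) := by exact_mod_cast hn
    have ht2 : (pn n).1 ≤ T := (hpnt n).2
    have h4 : (0:ℝ) ≤ (n:ℝ)^2 * (T - (pn n).1) :=
      mul_nonneg (sq_nonneg _) (sub_nonneg.mpr ht2)
    have h2 : ((pn n).2 - x₀)^2 ≤ 2*C₀ := by
      nlinarith [sq_nonneg ((pn n).2 - x₀)]
    calc |(pn n).2 - x₀| = Real.sqrt (((pn n).2 - x₀)^2) := (Real.sqrt_sq_eq_abs _).symm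
      _ ≤ Real.sqrt (2*C₀) := Real.sqrt_le_sqrt h2
  -- interior (in x) local minimum on the full domain
  have hloc : ∀ n : ℕ, 1 ≤ n → IsLocalMinOn
      (fun q => V q - ((n:ℝ)^2 * q.1 - (n:ℝ) * (q.2 - x₀)^2)) (Omb T) (pn n) := by
    intro n hn
    have hev : ∀ᶠ q : ℝ × ℝ in 𝓝 (pn n), |q.2 - (pn n).2| < 1 := by
      have hco : Continuous fun q : ℝ × ℝ => |q.2 - (pn n).2| :=
        (continuous_snd.sub continuous_const).abs
      have := (hco.tendsto (pn n)).eventually_lt_const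
        (show |(pn n).2 - (pn n).2| < 1 by simp)
      exact this
    have hfinal : ∀ᶠ q in 𝓝[Omb T] (pn n),
        (fun q => V q - ((n:ℝ)^2 * q.1 - (n:ℝ) * (q.2 - x₀)^2)) (pn n) ≤
          (fun q => V q - ((n:ℝ)^2 * q.1 - (n:ℝ) * (q.2 - x₀)^2)) q := by
      filter_upwards [hev.filter_mono nhdsWithin_le_nhds, self_mem_nhdsWithin]
        with q h1 h2
      apply hpnmin n q
      refine ⟨h2.1, ?_⟩
      have h3 := hxn_close n hn
      have h5 : |q.2 - x₀| ≤ r₀ := by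
        calc |q.2 - x₀| ≤ |q.2 - (pn n).2| + |(pn n).2 - x₀| := abs_sub_le _ _ _
          _ ≤ r₀ := by rw [hr₀]; linarith
      have h6 := abs_le.mp h5
      exact ⟨by linarith [h6.1], by linarith [h6.2]⟩
    exact hfinal
  -- apply the supersolution property
  have h0 : ∀ n : ℕ, 1 ≤ n → 0 ≤ upEnv T (Fb T β a b f g)
      (((pn n).1, (pn n).2), V (pn n), ((n:ℝ)^2, -(2*(n:ℝ)) * ((pn n).2 - x₀)),
        -(2*(n:ℝ)), MopB β Z Γ K V (pn n)) := by
    intro n hn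
    exact hsup _ _ _ _ (c12_quad (n:ℝ) x₀) (pn n) (hpnO n) (hloc n hn)
  have hmax : ∀ n : ℕ, 1 ≤ n →
      0 ≤ max (-(n:ℝ)^2 + β * V (pn n) -
          ham β a b f (pn n).1 (pn n).2 (-(2*(n:ℝ))) (-(2*(n:ℝ)) * ((pn n).2 - x₀)))
        (min (V (pn n) - Real.exp (β * T) * g (pn n).2)
          (V (pn n) - MopB β Z Γ K V (pn n))) := by
    intro n hn
    exact (upEnv_extract T β a b f g hfc hgc hac hbc (pn n).1 (pn n).2 (V (pn n))
      ((n:ℝ)^2) (-(2*(n:ℝ)) * ((pn n).2 - x₀)) (-(2*(n:ℝ)))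
      (MopB β Z Γ K V (pn n)) (hpnt n) (h0 n hn)).2
  -- bounds for a and b on the relevant compact slab
  obtain ⟨Ma, hMa⟩ := ((isCompact_Icc (a := x₀-r₀) (b := x₀+r₀)).prod
    (isCompact_univ (X := W))).exists_bound_of_continuousOn hac.continuousOn
  obtain ⟨Mb, hMb⟩ := ((isCompact_Icc (a := x₀-r₀) (b := x₀+r₀)).prod
    (isCompact_univ (X := W))).exists_bound_of_continuousOn hbc.continuousOn
  set w₀ : W := Classical.arbitrary W with hw₀
  have hx₀I : x₀ ∈ Set.Icc (x₀-r₀) (x₀+r₀) := ⟨by linarith, by linarith⟩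
  have hMa0 : 0 ≤ Ma := le_trans (norm_nonneg _) (hMa (x₀, w₀) ⟨hx₀I, trivial⟩)
  have hMb0 : 0 ≤ Mb := le_trans (norm_nonneg _) (hMb (x₀, w₀) ⟨hx₀I, trivial⟩)
  have hCf0 : 0 ≤ Cf := le_trans (abs_nonneg _) (hCf 0 ⟨le_refl 0, hT.le⟩ 0 w₀)
  -- lower bound for the Hamiltonian term
  have hamlb : ∀ n : ℕ,
      -((n:ℝ)*Mb^2 + 2*(n:ℝ)*Ma*r₀ + Cf) ≤
        ham β a b f (pn n).1 (pn n).2 (-(2*(n:ℝ))) (-(2*(n:ℝ)) * ((pn n).2 - x₀)) := by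
    intro n
    have hxI : (pn n).2 ∈ Set.Icc (x₀-r₀) (x₀+r₀) := (hpnK n).2
    have hb' : |b (pn n).2 w₀| ≤ Mb := by
      simpa using hMb ((pn n).2, w₀) ⟨hxI, trivial⟩
    have ha' : |a (pn n).2 w₀| ≤ Ma := by
      simpa using hMa ((pn n).2, w₀) ⟨hxI, trivial⟩
    have hf' := abs_le.mp (hCf (pn n).1 (hpnt n) (pn n).2 w₀)
    have h1 : |(pn n).2 - x₀| ≤ r₀ := abs_le.mpr ⟨by linarith [hxI.1], by linarith [hxI.2]⟩
    have hb2 : b (pn n).2 w₀ ^ 2 ≤ Mb^2 := by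
      nlinarith [abs_le.mp hb', sq_abs (b (pn n).2 w₀)]
    have hs : |a (pn n).2 w₀ * ((pn n).2 - x₀)| ≤ Ma * r₀ := by
      rw [abs_mul]
      exact mul_le_mul ha' h1 (abs_nonneg _) hMa0
    have hn0 : (0:ℝ) ≤ (n:ℝ) := Nat.cast_nonneg n
    have e1 : 0 ≤ (n:ℝ) * (Mb^2 - b (pn n).2 w₀ ^ 2) := mul_nonneg hn0 (by linarith)
    have e2 : 0 ≤ (n:ℝ) * (Ma*r₀ - a (pn n).2 w₀ * ((pn n).2 - x₀)) :=
      mul_nonneg hn0 (by linarith [abs_le.mp hs])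
    refine le_trans ?_ (le_ciSup (ham_bdd T β a b f hfc hac hbc (hpnt n) _ _ _) w₀)
    nlinarith only [hf'.1, e1, e2]
  -- A_n < 0 for large n
  obtain ⟨n₀, hn₀⟩ := exists_nat_ge (β*C₀ + Mb^2 + 2*Ma*r₀ + Cf + 1)
  have hAneg : ∀ n : ℕ, n₀ ≤ n → 1 ≤ n →
      -(n:ℝ)^2 + β * V (pn n) -
        ham β a b f (pn n).1 (pn n).2 (-(2*(n:ℝ))) (-(2*(n:ℝ)) * ((pn n).2 - x₀)) < 0 := by
    intro n hn hn1
    have h1 := hamlb n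
    have h2 : β * V (pn n) ≤ β * C₀ :=
      mul_le_mul_of_nonneg_left (abs_le.mp (hVpn n)).2 hβ.le
    have hn' : β*C₀ + Mb^2 + 2*Ma*r₀ + Cf + 1 ≤ (n:ℝ) := le_trans hn₀ (by exact_mod_cast hn)
    have hn1' : (1:ℝ) ≤ (n:ℝ) := by exact_mod_cast hn1
    have hbC : 0 ≤ β * C₀ := mul_nonneg hβ.le hC00
    have hn0' : (0:ℝ) ≤ (n:ℝ) := Nat.cast_nonneg n
    have key : (n:ℝ)^2 > β*C₀ + ((n:ℝ)*Mb^2 + 2*(n:ℝ)*Ma*r₀ + Cf) := by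
      have e1 : 0 ≤ ((n:ℝ) - 1) * (β*C₀) := mul_nonneg (by linarith) hbC
      have e2 : 0 ≤ ((n:ℝ) - 1) * Cf := mul_nonneg (by linarith) hCf0
      have p1 : 0 ≤ ((n:ℝ) - (β*C₀ + Mb^2 + 2*Ma*r₀ + Cf + 1)) * (n:ℝ) :=
        mul_nonneg (by linarith) hn0'
      nlinarith only [e1, e2, p1, hn1']
    linarith only [h1, h2, key]
  -- for large n, the terminal branch holds
  have hB : ∀ n : ℕ, max n₀ 1 ≤ n →
      Real.exp (β * T) * g (pn n).2 ≤ V (pn n) ∧ MopB β Z Γ K V (pn n) ≤ V (pn n) := by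
    intro n hn
    have hn₀' : n₀ ≤ n := le_trans (le_max_left _ _) hn
    have hn1 : 1 ≤ n := le_trans (le_max_right _ _) hn
    have h1 := hmax n hn1
    have h2 := hAneg n hn₀' hn1
    rcases le_max_iff.mp h1 with h3 | h3
    · linarith
    · have h4 := le_min_iff.mp h3
      exact ⟨by linarith [h4.1], by linarith [h4.2]⟩
  -- convergence of the minimizers to (T, x₀)
  have hdiv : Tendsto (fun n : ℕ => 2*C₀/(n:ℝ)) atTop (𝓝 0) :=
    tendsto_const_div_atTop_nhds_zero_nat (2*C₀)
  have hxconv : Tendsto (fun n => (pn n).2) atTop (𝓝 x₀) := by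
    have hsq : Tendsto (fun n : ℕ => ((pn n).2 - x₀)^2) atTop (𝓝 0) := by
      apply squeeze_zero' (Eventually.of_forall fun n => sq_nonneg _) ?_ hdiv
      refine Filter.eventually_atTop.mpr ⟨1, fun n hn => ?_⟩
      have hn1 : (1:ℝ) ≤ (n:ℝ) := by exact_mod_cast hn
      have h1 := hkey n
      have h4 : (0:ℝ) ≤ (n:ℝ)^2 * (T - (pn n).1) :=
        mul_nonneg (sq_nonneg _) (sub_nonneg.mpr (hpnt n).2)
      rw [le_div_iff₀ (by linarith)]
      nlinarith [sq_nonneg ((pn n).2 - x₀)]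
    have habs : Tendsto (fun n : ℕ => |(pn n).2 - x₀|) atTop (𝓝 0) := by
      have h := (Real.continuous_sqrt.tendsto 0).comp hsq
      simpa [Function.comp_def, Real.sqrt_sq_eq_abs] using h
    rw [tendsto_iff_dist_tendsto_zero]
    simpa [Real.dist_eq] using habs
  have htconv : Tendsto (fun n => (pn n).1) atTop (𝓝 T) := by
    rw [tendsto_iff_dist_tendsto_zero]
    apply squeeze_zero' (Eventually.of_forall fun n => dist_nonneg) ?_ hdiv
    refine Filter.eventually_atTop.mpr ⟨1, fun n hn => ?_⟩
    have hn1 : (1:ℝ) ≤ (n:ℝ) := by exact_mod_cast hn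
    have h1 := hkey n
    have h3 : (0:ℝ) ≤ (n:ℝ) * ((pn n).2 - x₀)^2 := by positivity
    have ht2 : (pn n).1 ≤ T := (hpnt n).2
    have hd : dist (pn n).1 T = T - (pn n).1 := by
      rw [Real.dist_eq, abs_of_nonpos (by linarith)]; ring
    rw [hd, le_div_iff₀ (by linarith)]
    have hTt : (0:ℝ) ≤ T - (pn n).1 := sub_nonneg.mpr ht2
    have p1 : (T - (pn n).1) * (n:ℝ) ≤ (n:ℝ)^2 * (T - (pn n).1) := by
      have : 0 ≤ ((n:ℝ)^2 - (n:ℝ)) * (T - (pn n).1) :=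
        mul_nonneg (by nlinarith only [hn1]) hTt
      linarith only [this]
    linarith only [h1, h3, p1]
  have hpconv : Tendsto pn atTop (𝓝 (T, x₀)) := by
    have h := htconv.prodMk_nhds hxconv
    exact h.congr fun n => rfl
  -- first conclusion
  have hgconv : Tendsto (fun n => Real.exp (β * T) * g (pn n).2) atTop
      (𝓝 (Real.exp (β * T) * g x₀)) := ((hgc.tendsto x₀).comp hxconv).const_mul _
  have hconc1 : Real.exp (β * T) * g x₀ ≤ V (T, x₀) := by
    apply le_of_tendsto hgconv
    refine Filter.eventually_atTop.mpr ⟨max n₀ 1, fun n hn => ?_⟩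
    exact le_trans (hB n hn).1 (hVle n)
  refine ⟨hconc1, ?_⟩
  -- second conclusion
  refine le_of_forall_lt fun y hy => ?_
  have hy' : y < sSup ((fun z => V (T, Γ T x₀ z) + Real.exp (β * T) * K T x₀ z) ''
      (Z (T, x₀) : Set Y)) := hy
  obtain ⟨v, ⟨z, hz, rfl⟩, hyv⟩ :=
    exists_lt_of_lt_csSup (((Z (T, x₀)).nonempty).image _) hy'
  -- choose approximating interventions
  have hZt : Tendsto (fun n => Z (pn n)) atTop (𝓝 (Z (T, x₀))) :=
    (hZ _ hTO).tendsto.comp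
      (tendsto_nhdsWithin_iff.mpr ⟨hpconv, Eventually.of_forall hpnO⟩)
  have hzn : ∀ n : ℕ, ∃ zz ∈ (Z (pn n) : Set Y),
      EMetric.infEdist z (Z (pn n) : Set Y) = edist z zz := fun n =>
    (Z (pn n)).isCompact.exists_infEdist_eq_edist (Z (pn n)).nonempty z
  choose zn hznm hznd using hzn
  have hznconv : Tendsto zn atTop (𝓝 z) := by
    rw [EMetric.tendsto_atTop]
    intro ε hε
    obtain ⟨N, hN⟩ := EMetric.tendsto_atTop.mp hZt ε hε
    refine ⟨N, fun n hn => ?_⟩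
    have h1 : edist (zn n) z = EMetric.infEdist z (Z (pn n) : Set Y) := by
      rw [edist_comm]; exact (hznd n).symm
    have h2 : EMetric.infEdist z (Z (pn n) : Set Y) ≤
        EMetric.hausdorffEdist (Z (T, x₀) : Set Y) (Z (pn n) : Set Y) :=
      EMetric.infEdist_le_hausdorffEdist_of_mem hz
    have h3 : EMetric.hausdorffEdist (Z (T, x₀) : Set Y) (Z (pn n) : Set Y) =
        edist (Z (pn n)) (Z (T, x₀)) := by
      unfold EMetric.hausdorffEdist; rw [Metric.hausdorffEDist_comm]; rfl
    calc edist (zn n) z = EMetric.infEdist z (Z (pn n) : Set Y) := h1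
      _ ≤ _ := h2
      _ = edist (Z (pn n)) (Z (T, x₀)) := h3
      _ < ε := hN n hn
  -- convergence of the intervened values
  set ε' : ℝ := V (T, Γ T x₀ z) + Real.exp (β * T) * K T x₀ z - y with hε'def
  clear_value ε'
  have hyv' : y < V (T, Γ T x₀ z) + Real.exp (β * T) * K T x₀ z := hyv
  have hε' : 0 < ε' := by rw [hε'def]; linarith
  have htrip : Tendsto (fun n => (((pn n).1, (pn n).2, zn n) : ℝ × ℝ × Y)) atTop
      (𝓝[{p : ℝ × ℝ × Y | p.1 ∈ Set.Icc 0 T}] (T, x₀, z)) := by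
    rw [tendsto_nhdsWithin_iff]
    exact ⟨htconv.prodMk_nhds (hxconv.prodMk_nhds hznconv),
      Eventually.of_forall fun n => hpnt n⟩
  have hTm : ((T, x₀, z) : ℝ × ℝ × Y) ∈ {p : ℝ × ℝ × Y | p.1 ∈ Set.Icc 0 T} :=
    ⟨hT.le, le_refl T⟩
  have hΓconv : Tendsto (fun n => Γ (pn n).1 (pn n).2 (zn n)) atTop (𝓝 (Γ T x₀ z)) :=
    ((hΓ _ hTm).tendsto).comp htrip
  have hKconv : Tendsto (fun n => K (pn n).1 (pn n).2 (zn n)) atTop (𝓝 (K T x₀ z)) :=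
    ((hK _ hTm).tendsto).comp htrip
  have hexpc : Tendsto (fun n => Real.exp (β * (pn n).1)) atTop (𝓝 (Real.exp (β * T))) :=
    (Real.continuous_exp.tendsto _).comp (htconv.const_mul β)
  have hKterm : Tendsto (fun n => Real.exp (β * (pn n).1) * K (pn n).1 (pn n).2 (zn n))
      atTop (𝓝 (Real.exp (β * T) * K T x₀ z)) := hexpc.mul hKconv
  have hKev : ∀ᶠ n : ℕ in atTop, Real.exp (β * T) * K T x₀ z - ε'/3 <
      Real.exp (β * (pn n).1) * K (pn n).1 (pn n).2 (zn n) :=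
    hKterm.eventually_const_lt (by linarith)
  have hVev : ∀ᶠ n : ℕ in atTop, V (T, Γ T x₀ z) - ε'/3 <
      V ((pn n).1, Γ (pn n).1 (pn n).2 (zn n)) := by
    have hmem : ((T, Γ T x₀ z) : ℝ × ℝ) ∈ Omb T := ⟨⟨hT.le, le_refl T⟩, trivial⟩
    have hlsc := hVlsc _ hmem (V (T, Γ T x₀ z) - ε'/3) (by linarith)
    have hq : Tendsto (fun n => (((pn n).1, Γ (pn n).1 (pn n).2 (zn n)) : ℝ × ℝ))
        atTop (𝓝[Omb T] (T, Γ T x₀ z)) := by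
      rw [tendsto_nhdsWithin_iff]
      exact ⟨htconv.prodMk_nhds hΓconv,
        Eventually.of_forall fun n => ⟨hpnt n, trivial⟩⟩
    exact hq hlsc
  have hVub : ∀ q ∈ Omb T, V q ≤ C₀ := fun q hq => (abs_le.mp (hC₀ q hq)).2
  have hfin : ∀ᶠ n : ℕ in atTop, y < V (T, x₀) := by
    filter_upwards [hKev, hVev, Filter.eventually_ge_atTop (max n₀ 1)] with n h1 h2 h3
    have hle1 : V ((pn n).1, Γ (pn n).1 (pn n).2 (zn n)) +
        Real.exp (β * (pn n).1) * K (pn n).1 (pn n).2 (zn n) ≤ MopB β Z Γ K V (pn n) :=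
      le_mopB β Z Γ K V (pn n)
        (mopB_bdd T β Z Γ K Ksup hKs hKsneg.le V C₀ hVub (pn n) (hpnO n)) (hznm n)
    have hle2 : MopB β Z Γ K V (pn n) ≤ V (pn n) := (hB n h3).2
    have hle3 : V (pn n) ≤ V (T, x₀) := hVle n
    have : y < V ((pn n).1, Γ (pn n).1 (pn n).2 (zn n)) +
        Real.exp (β * (pn n).1) * K (pn n).1 (pn n).2 (zn n) := by
      rw [hε'def] at h1 h2
      linarith
    linarith
  obtain ⟨n, hn⟩ := hfin.exists
  exact hn

lemma ham_scale (T β : ℝ) {W : Type*} [MetricSpace W] [CompactSpace W] [Nonempty W]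
    (a b : ℝ → W → ℝ) (f : ℝ → ℝ → W → ℝ)
    (hfc : ContinuousOn (fun p : ℝ × ℝ × W => f p.1 p.2.1 p.2.2)
      {p : ℝ × ℝ × W | p.1 ∈ Set.Icc 0 T})
    (hac : Continuous fun p : ℝ × W => a p.1 p.2)
    (hbc : Continuous fun p : ℝ × W => b p.1 p.2)
    (Cf : ℝ) (hCf : ∀ t ∈ Set.Icc (0 : ℝ) T, ∀ (x : ℝ) (w : W),
      |Real.exp (β * t) * f t x w| ≤ Cf)
    {t : ℝ} (ht : t ∈ Set.Icc 0 T) (x A pp : ℝ) {lam : ℝ}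
    (h0 : 0 < lam) (h1 : lam < 1) :
    ham β a b f t x A pp ≤
      (1-lam) * ham β a b f t x ((1-lam)⁻¹ * A) ((1-lam)⁻¹ * pp) + lam * Cf := by
  apply ciSup_le
  intro w
  have hb := le_ciSup (ham_bdd T β a b f hfc hac hbc ht x ((1-lam)⁻¹*A) ((1-lam)⁻¹*pp)) w
  have hf' := abs_le.mp (hCf t ht x w)
  have hne : (1 - lam) ≠ 0 := by linarith
  have key : ((1:ℝ)/2) * b x w ^ 2 * A + a x w * pp + Real.exp (β*t) * f t x w
      = (1-lam) * (((1:ℝ)/2) * b x w ^ 2 * ((1-lam)⁻¹*A) + a x w * ((1-lam)⁻¹*pp)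
          + Real.exp (β*t) * f t x w) + lam * (Real.exp (β*t) * f t x w) := by
    field_simp
    ring
  rw [key]
  have h2 : lam * (Real.exp (β*t) * f t x w) ≤ lam * Cf :=
    mul_le_mul_of_nonneg_left hf'.2 h0.le
  have h3 := mul_le_mul_of_nonneg_left hb (by linarith : (0:ℝ) ≤ 1 - lam)
  simp only [ham]
  linarith

/-- Construction of strict supersolutions: if `V` is a bounded lower semicontinuous
supersolution of the discounted HJBQVI, `c = max{(‖f_β‖_∞ + 1)/β, ‖g_β‖_∞ + 1}`,
`K₀ = −sup K > 0`, `ξ = min{1, K₀}` and `V_λ = (1−λ)V + λc` for `0 < λ < 1`, then `V_λ`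
is a strict supersolution with margin `λξ`: (a) at every interior local minimum point of
`V_λ − φ` the operator `F_β` evaluates to at least `λξ`, and (b) at the terminal time
`min{ V_λ(T,x) − g_β(x), V_λ(T,x) − M_β V_λ(T,x) } ≥ λξ`. -/
theorem hjbqvi_strict_supersolution
    (T : ℝ) (hT : 0 < T) (β : ℝ) (hβ : 0 < β)
    {W : Type*} [MetricSpace W] [CompactSpace W] [Nonempty W]
    {Y : Type*} [MetricSpace Y]
    (Z : ℝ × ℝ → NonemptyCompacts Y) (hZ : ContinuousOn Z (Omb T))
    (f : ℝ → ℝ → W → ℝ)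
    (hfc : ContinuousOn (fun p : ℝ × ℝ × W => f p.1 p.2.1 p.2.2)
      {p : ℝ × ℝ × W | p.1 ∈ Set.Icc 0 T})
    (g : ℝ → ℝ) (hgc : Continuous g)
    (Γ : ℝ → ℝ → Y → ℝ)
    (hΓ : ContinuousOn (fun p : ℝ × ℝ × Y => Γ p.1 p.2.1 p.2.2)
      {p : ℝ × ℝ × Y | p.1 ∈ Set.Icc 0 T})
    (K : ℝ → ℝ → Y → ℝ)
    (hK : ContinuousOn (fun p : ℝ × ℝ × Y => K p.1 p.2.1 p.2.2)
      {p : ℝ × ℝ × Y | p.1 ∈ Set.Icc 0 T})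
    (a b : ℝ → W → ℝ)
    (hac : Continuous fun p : ℝ × W => a p.1 p.2)
    (hbc : Continuous fun p : ℝ × W => b p.1 p.2)
    (L : ℝ) (hLip : ∀ x x' w, |a x w - a x' w| + |b x w - b x' w| ≤ L * |x - x'|)
    (hMg : ∀ x : ℝ, Mop Z Γ K (fun q => g q.2) (T, x) ≤ g x)
    -- `Cf` bounds `‖f_β‖_∞`, `Cg` bounds `‖g_β‖_∞`, and `Ksup` bounds `sup K < 0`:
    (Cf : ℝ) (hCf : ∀ t ∈ Set.Icc (0 : ℝ) T, ∀ (x : ℝ) (w : W),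
      |Real.exp (β * t) * f t x w| ≤ Cf)
    (Cg : ℝ) (hCg : ∀ x : ℝ, |Real.exp (β * T) * g x| ≤ Cg)
    (Ksup : ℝ) (hKs : ∀ t ∈ Set.Icc (0 : ℝ) T, ∀ (x : ℝ) (z : Y), K t x z ≤ Ksup)
    (hKsneg : Ksup < 0)
    (V : ℝ × ℝ → ℝ) (hVb : ∃ C, ∀ p ∈ Omb T, |V p| ≤ C)
    (hVlsc : LowerSemicontinuousOn V (Omb T))
    (hsup : IsSupersolB T β a b f g Z Γ K V)
    (lam : ℝ) (hlam0 : 0 < lam) (hlam1 : lam < 1) :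
    (∀ φ φt φx φxx : ℝ × ℝ → ℝ, C12 φ φt φx φxx →
      ∀ p : ℝ × ℝ, p ∈ Omb T → p.1 < T →
        IsLocalMinOn
          (fun q => ((1 - lam) * V q + lam * max ((Cf + 1) / β) (Cg + 1)) - φ q)
          (Omb T) p →
        lam * min 1 (-Ksup) ≤
          Fb T β a b f g
            (p, (1 - lam) * V p + lam * max ((Cf + 1) / β) (Cg + 1),
              (φt p, φx p), φxx p,
              MopB β Z Γ K
                (fun q => (1 - lam) * V q + lam * max ((Cf + 1) / β) (Cg + 1)) p)) ∧
    (∀ x : ℝ,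
      lam * min 1 (-Ksup) ≤
        min (((1 - lam) * V (T, x) + lam * max ((Cf + 1) / β) (Cg + 1))
              - Real.exp (β * T) * g x)
          (((1 - lam) * V (T, x) + lam * max ((Cf + 1) / β) (Cg + 1))
            - MopB β Z Γ K
                (fun q => (1 - lam) * V q + lam * max ((Cf + 1) / β) (Cg + 1)) (T, x))) := by
  classical
  obtain ⟨C₀, hC₀⟩ := hVb
  have h1l : (0:ℝ) < 1 - lam := by linarith
  set c : ℝ := max ((Cf + 1) / β) (Cg + 1) with hc
  have hVub : ∀ q ∈ Omb T, V q ≤ C₀ := fun q hq => (abs_le.mp (hC₀ q hq)).2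
  have hξ1 : min 1 (-Ksup) ≤ 1 := min_le_left _ _
  have hξK : min 1 (-Ksup) ≤ -Ksup := min_le_right _ _
  have hcCf : Cf + 1 ≤ β * c := by
    have h := le_max_left ((Cf + 1) / β) (Cg + 1)
    rw [div_le_iff₀ hβ] at h
    rw [hc]; linarith [h]
  have hcCg : Cg + 1 ≤ c := by rw [hc]; exact le_max_right _ _
  -- the key second-component estimate, valid at every point of the domain
  have hstep2 : ∀ p ∈ Omb T, MopB β Z Γ K V p ≤ V p →
      lam * min 1 (-Ksup) ≤
        ((1 - lam) * V p + lam * c) -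
          MopB β Z Γ K (fun q => (1 - lam) * V q + lam * c) p := by
    intro p hp hM
    have hMle : MopB β Z Γ K (fun q => (1 - lam) * V q + lam * c) p ≤
        (1 - lam) * MopB β Z Γ K V p + lam * c + lam * Ksup := by
      apply mopB_le
      intro z hz
      have hVb' := mopB_bdd T β Z Γ K Ksup hKs hKsneg.le V C₀ hVub p hp
      have h5 := le_mopB β Z Γ K V p hVb' hz
      have h6 : Real.exp (β * p.1) * K p.1 p.2 z ≤ Ksup := by
        have h7 := hKs p.1 hp.1 p.2 z
        have h8 : 1 ≤ Real.exp (β * p.1) := Real.one_le_exp (mul_nonneg hβ.le hp.1.1)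
        nlinarith
      have h9 : lam * (Real.exp (β * p.1) * K p.1 p.2 z) ≤ lam * Ksup :=
        mul_le_mul_of_nonneg_left h6 hlam0.le
      have h10 : (1 - lam) * (V (p.1, Γ p.1 p.2 z) + Real.exp (β * p.1) * K p.1 p.2 z) ≤
          (1 - lam) * MopB β Z Γ K V p := mul_le_mul_of_nonneg_left h5 h1l.le
      nlinarith [h9, h10]
    have h11 : 0 ≤ (1 - lam) * (V p - MopB β Z Γ K V p) :=
      mul_nonneg h1l.le (by linarith)
    have h12 : lam * min 1 (-Ksup) ≤ lam * (-Ksup) :=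
      mul_le_mul_of_nonneg_left hξK hlam0.le
    nlinarith [h11, h12, hMle]
  constructor
  · -- part (a)
    intro φ φt φx φxx hφ p hp hplt hmin
    obtain ⟨t₀, x₀⟩ := p
    -- scaled test function
    have hψC12 : C12 (fun q => (1 - lam)⁻¹ * (φ q - lam * c))
        (fun q => (1 - lam)⁻¹ * φt q) (fun q => (1 - lam)⁻¹ * φx q)
        (fun q => (1 - lam)⁻¹ * φxx q) := by
      obtain ⟨c1, c2, c3, c4, d1, d2, d3⟩ := hφ
      refine ⟨by fun_prop, by fun_prop, by fun_prop, by fun_prop, ?_, ?_, ?_⟩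
      · intro q
        have h := HasDerivAt.const_mul ((1 - lam)⁻¹) ((d1 q).sub_const (lam * c))
        simpa using h
      · intro q
        have h := HasDerivAt.const_mul ((1 - lam)⁻¹) ((d2 q).sub_const (lam * c))
        simpa using h
      · intro q
        have h := HasDerivAt.const_mul ((1 - lam)⁻¹) (d3 q)
        simpa using h
    have hne : (1 - lam) ≠ 0 := ne_of_gt h1l
    have hidq : ∀ (v w : ℝ), v - (1 - lam)⁻¹ * (w - lam * c) =
        (1 - lam)⁻¹ * (((1 - lam) * v + lam * c) - w) := by
      intro v w; field_simp; ring
    have hminV : IsLocalMinOn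
        (fun q => V q - (1 - lam)⁻¹ * (φ q - lam * c)) (Omb T) (t₀, x₀) := by
      have hmin' : ∀ᶠ q in 𝓝[Omb T] (t₀, x₀),
          ((1 - lam) * V (t₀, x₀) + lam * c) - φ (t₀, x₀) ≤
            ((1 - lam) * V q + lam * c) - φ q := hmin
      show ∀ᶠ q in 𝓝[Omb T] (t₀, x₀),
          V (t₀, x₀) - (1 - lam)⁻¹ * (φ (t₀, x₀) - lam * c) ≤
            V q - (1 - lam)⁻¹ * (φ q - lam * c)
      filter_upwards [hmin'] with q hq
      rw [hidq, hidq]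
      exact mul_le_mul_of_nonneg_left hq (inv_nonneg.mpr h1l.le)
    have h0 := hsup _ _ _ _ hψC12 (t₀, x₀) hp hminV
    have hint := (upEnv_extract T β a b f g hfc hgc hac hbc t₀ x₀ (V (t₀, x₀))
      ((1 - lam)⁻¹ * φt (t₀, x₀)) ((1 - lam)⁻¹ * φx (t₀, x₀))
      ((1 - lam)⁻¹ * φxx (t₀, x₀)) (MopB β Z Γ K V (t₀, x₀)) hp.1 h0).1 hplt
    have hmin1 := (le_min_iff.mp hint).1
    have hmin2 := (le_min_iff.mp hint).2
    rw [fb_eq, if_pos hplt]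
    apply le_min
    · -- first component
      have hham := ham_scale T β a b f hfc hac hbc Cf hCf hp.1 x₀
        (φxx (t₀, x₀)) (φx (t₀, x₀)) hlam0 hlam1
      have hid : (1 - lam) * ((1 - lam)⁻¹ * φt (t₀, x₀)) = φt (t₀, x₀) := by
        field_simp
      have h4 := mul_le_mul_of_nonneg_left hmin1 h1l.le
      have h13 : lam * min 1 (-Ksup) ≤ lam * 1 :=
        mul_le_mul_of_nonneg_left hξ1 hlam0.le
      have h14 : lam * (Cf + 1) ≤ lam * (β * c) :=
        mul_le_mul_of_nonneg_left hcCf hlam0.le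
      nlinarith [h4, hham, hid, h13, h14]
    · -- second component
      exact hstep2 (t₀, x₀) hp (by linarith)
  · -- part (b)
    intro x
    obtain ⟨hg1, hM1⟩ := terminal_ineq T hT β hβ Z hZ f hfc g hgc Γ hΓ K hK a b hac hbc
      Cf hCf Ksup hKs hKsneg V ⟨C₀, hC₀⟩ hVlsc hsup x
    have hTO : ((T, x) : ℝ × ℝ) ∈ Omb T := ⟨⟨hT.le, le_refl T⟩, trivial⟩
    apply le_min
    · have h1 : Real.exp (β * T) * g x ≤ Cg := (abs_le.mp (hCg x)).2
      have h2 : (1 - lam) * (Real.exp (β * T) * g x) ≤ (1 - lam) * V (T, x) :=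
        mul_le_mul_of_nonneg_left hg1 h1l.le
      have h13 : lam * min 1 (-Ksup) ≤ lam * 1 :=
        mul_le_mul_of_nonneg_left hξ1 hlam0.le
      have h14 : lam * (Cg + 1) ≤ lam * c := mul_le_mul_of_nonneg_left hcCg hlam0.le
      have h15 : lam * (Real.exp (β * T) * g x) ≤ lam * Cg :=
        mul_le_mul_of_nonneg_left h1 hlam0.le
      nlinarith [h2, h13, h14, h15]
    · exact hstep2 (T, x) hTO hM1
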